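/- For every integer p ≥ 1 and every real number x ≠ 0, the sum over the p-th roots contributions satisfies ∑_{m=0}^{p-1} 1/(sin²(πm/p) + sinh²(x)) = p·sinh(2px)/(sinh(2x)·sinh²(px)), and this common value also equals 2p·cosh(px)/(sinh(2x)·sinh(px)). -/

import Mathlib

open Real

open Polynomial in
private lemma my_derivative_finset_prod {ι : Type*} [DecidableEq ι] {R : Type*} [CommRing R]
    (s : Finset ι) (f : ι → R[X]) :
    derivative (∏ i ∈ s, f i) = ∑ i ∈ s, (∏ j ∈ s.erase i, f j) * derivative (f i) := by
  induction s using Finset.induction with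
  | empty => simp
  | @insert a s ha ih =>
    rw [Finset.prod_insert ha, derivative_mul, ih, Finset.mul_sum, Finset.sum_insert ha,
      Finset.erase_insert ha]
    congr 1
    · ring
    · refine Finset.sum_congr rfl fun i hi => ?_
      rw [Finset.erase_insert_of_ne (by rintro rfl; exact ha hi),
        Finset.prod_insert (fun h => ha (Finset.mem_of_mem_erase h))]
      ring

open Polynomial in
private lemma prod_polyC (p : ℕ) (hp : 1 ≤ p) :
    ∏ m ∈ Finset.range p,
      (X ^ 2 - C ((2 * Real.cos (2 * Real.pi * m / p) : ℝ) : ℂ) * X + 1 : ℂ[X]) =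
      ((X : ℂ[X]) ^ p - 1) ^ 2 := by
  set ζ : ℂ := Complex.exp (2 * Real.pi * Complex.I / p) with hζdef
  have hζ : IsPrimitiveRoot ζ p := Complex.isPrimitiveRoot_exp p (by omega)
  have hζ0 : ζ ≠ 0 := Complex.exp_ne_zero _
  have key : ∀ m : ℕ, ((2 * Real.cos (2 * Real.pi * m / p) : ℝ) : ℂ)
      = ζ ^ m + (ζ⁻¹) ^ m := by
    intro m
    have h1 : ζ ^ m = Complex.exp (((2 * Real.pi * m / p : ℝ) : ℂ) * Complex.I) := by
      rw [hζdef, ← Complex.exp_nat_mul]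
      congr 1
      push_cast
      ring
    have h2 : (ζ⁻¹) ^ m = Complex.exp (-(((2 * Real.pi * m / p : ℝ) : ℂ) * Complex.I)) := by
      rw [inv_pow, h1, ← Complex.exp_neg]
    rw [h1, h2]
    push_cast
    rw [Complex.two_cos, neg_mul]
  have factor : ∀ m : ℕ,
      (X ^ 2 - C ((2 * Real.cos (2 * Real.pi * m / p) : ℝ) : ℂ) * X + 1 : ℂ[X])
        = (X - C (ζ ^ m)) * (X - C ((ζ⁻¹) ^ m)) := by
    intro m
    have hab : ζ ^ m * (ζ⁻¹) ^ m = 1 := by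
      rw [← mul_pow, mul_inv_cancel₀ hζ0, one_pow]
    have expand : ((X : ℂ[X]) - C (ζ ^ m)) * (X - C ((ζ⁻¹) ^ m))
        = X ^ 2 - (C (ζ ^ m) + C ((ζ⁻¹) ^ m)) * X + C (ζ ^ m) * C ((ζ⁻¹) ^ m) := by ring
    rw [expand, ← map_mul, hab, map_one, ← map_add, key]
  have hprod1 : ∏ m ∈ Finset.range p, ((X : ℂ[X]) - C (ζ ^ m)) = X ^ p - 1 := by
    have := X_pow_sub_C_eq_prod hζ (by omega : 0 < p) (one_pow p)
    simp only [mul_one, map_one] at this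
    rw [← this]
  have hprod2 : ∏ m ∈ Finset.range p, ((X : ℂ[X]) - C ((ζ⁻¹) ^ m)) = X ^ p - 1 := by
    have := X_pow_sub_C_eq_prod hζ.inv (by omega : 0 < p) (one_pow p)
    simp only [mul_one, map_one] at this
    rw [← this]
  calc ∏ m ∈ Finset.range p,
        (X ^ 2 - C ((2 * Real.cos (2 * Real.pi * m / p) : ℝ) : ℂ) * X + 1 : ℂ[X])
      = ∏ m ∈ Finset.range p, ((X - C (ζ ^ m)) * (X - C ((ζ⁻¹) ^ m))) :=
        Finset.prod_congr rfl fun m _ => factor m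
    _ = (∏ m ∈ Finset.range p, ((X : ℂ[X]) - C (ζ ^ m)))
        * ∏ m ∈ Finset.range p, ((X : ℂ[X]) - C ((ζ⁻¹) ^ m)) := Finset.prod_mul_distrib
    _ = ((X : ℂ[X]) ^ p - 1) ^ 2 := by rw [hprod1, hprod2, sq]

open Polynomial in
private lemma prod_polyR (p : ℕ) (hp : 1 ≤ p) :
    ∏ m ∈ Finset.range p,
      (X ^ 2 - C (2 * Real.cos (2 * Real.pi * m / p)) * X + 1 : ℝ[X]) =
      ((X : ℝ[X]) ^ p - 1) ^ 2 := by
  have hinj : Function.Injective (Polynomial.map (algebraMap ℝ ℂ)) :=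
    Polynomial.map_injective _ (algebraMap ℝ ℂ).injective
  apply hinj
  rw [Polynomial.map_prod]
  simp only [Polynomial.map_add, Polynomial.map_sub, Polynomial.map_pow, Polynomial.map_mul,
    Polynomial.map_one, Polynomial.map_X, Polynomial.map_C]
  simpa using prod_polyC p hp

theorem elliptic_image_sum (p : ℕ) (hp : 1 ≤ p) (x : ℝ) (hx : x ≠ 0) :
    (∑ m ∈ Finset.range p,
        1 / (Real.sin (Real.pi * m / p) ^ 2 + Real.sinh x ^ 2)) =
      p * Real.sinh (2 * p * x) / (Real.sinh (2 * x) * Real.sinh (p * x) ^ 2) ∧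
    (∑ m ∈ Finset.range p,
        1 / (Real.sin (Real.pi * m / p) ^ 2 + Real.sinh x ^ 2)) =
      2 * p * Real.cosh (p * x) / (Real.sinh (2 * x) * Real.sinh (p * x)) := by
  have hp0 : p ≠ 0 := by omega
  set u : ℝ := Real.exp x with hudef
  have hu0 : (0:ℝ) < u := Real.exp_pos x
  have hun : ∀ n : ℕ, n ≠ 0 → u ^ n ≠ 1 := by
    intro n hn h
    rw [hudef, ← Real.exp_nat_mul, Real.exp_eq_one_iff] at h
    exact mul_ne_zero (Nat.cast_ne_zero.mpr hn) hx h
  set z : ℝ := u ^ 2 with hzdef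
  have hz0 : (0:ℝ) < z := by positivity
  have hz1 : z ≠ 1 := hun 2 (by omega)
  set c : ℕ → ℝ := fun m => 2 * Real.cos (2 * Real.pi * m / p) with hcdef
  set g : ℕ → ℝ := fun m => z ^ 2 - c m * z + 1 with hgdef
  have hgpos : ∀ m, 0 < g m := by
    intro m
    have h1 : Real.cos (2 * Real.pi * m / p) ≤ 1 := Real.cos_le_one _
    have h2 : -1 ≤ Real.cos (2 * Real.pi * m / p) := Real.neg_one_le_cos _
    have h3 : (0:ℝ) < (z - 1) ^ 2 := by
      have : z - 1 ≠ 0 := sub_ne_zero.mpr hz1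
      positivity
    simp only [hgdef, hcdef]
    nlinarith
  have hterm : ∀ m : ℕ, Real.sin (Real.pi * m / p) ^ 2 + Real.sinh x ^ 2 = g m / (4 * z) := by
    intro m
    have hcos : Real.cos (2 * Real.pi * m / p) = 1 - 2 * Real.sin (Real.pi * m / p) ^ 2 := by
      have h1 : 2 * Real.pi * m / p = 2 * (Real.pi * m / p) := by ring
      have h2 := Real.sin_sq_add_cos_sq (Real.pi * m / p)
      rw [h1, Real.cos_two_mul']
      linarith
    have hsinh : Real.sinh x = (u - u⁻¹) / 2 := by
      rw [Real.sinh_eq, Real.exp_neg, hudef]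
    rw [hsinh]
    simp only [hgdef, hcdef, hcos, hzdef]
    field_simp
    ring
  have E : ∑ m ∈ Finset.range p,
      (∏ k ∈ (Finset.range p).erase m, g k) * (2*z - c m)
      = 2*(z^p - 1)*(p*z^(p-1)) := by
    have hD := congrArg (fun q => Polynomial.eval z (Polynomial.derivative q)) (prod_polyR p hp)
    rw [my_derivative_finset_prod] at hD
    simp only [Polynomial.eval_finset_sum, Polynomial.eval_mul, Polynomial.eval_prod,
      Polynomial.eval_add, Polynomial.eval_sub, Polynomial.eval_pow, Polynomial.eval_one,
      Polynomial.eval_X, Polynomial.eval_C, Polynomial.derivative_add, Polynomial.derivative_sub,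
      Polynomial.derivative_one, Polynomial.derivative_mul, Polynomial.derivative_C,
      Polynomial.derivative_X, Polynomial.derivative_X_pow, Polynomial.derivative_pow,
      Polynomial.eval_zero, Polynomial.eval_natCast] at hD
    norm_num at hD
    rw [← hD]
  set P : ℝ := (z ^ p - 1) ^ 2 with hPdef
  have hzp1 : z ^ p ≠ 1 := by
    rw [hzdef, ← pow_mul]
    exact hun (2*p) (by omega)
  have hzp : z ^ p - 1 ≠ 0 := sub_ne_zero.mpr hzp1
  have hz2 : z ^ 2 - 1 ≠ 0 := by
    rw [hzdef, ← pow_mul]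
    exact sub_ne_zero.mpr (hun 4 (by omega))
  have hprodP : ∏ k ∈ Finset.range p, g k = P := by
    have := congrArg (Polynomial.eval z) (prod_polyR p hp)
    simpa only [Polynomial.eval_prod, Polynomial.eval_add, Polynomial.eval_sub,
      Polynomial.eval_pow, Polynomial.eval_one, Polynomial.eval_X, Polynomial.eval_mul,
      Polynomial.eval_C] using this
  have herase : ∀ m ∈ Finset.range p, ∏ k ∈ (Finset.range p).erase m, g k = P / g m := by
    intro m hm
    rw [eq_div_iff (hgpos m).ne']
    rw [Finset.prod_erase_mul _ _ hm, hprodP]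
  set T : ℝ := ∑ m ∈ Finset.range p, 1 / g m with hTdef
  have hzz : z ^ (p-1) = z ^ p / z := by
    rw [eq_div_iff hz0.ne', ← pow_succ]
    congr 1
    omega
  have step : ∀ m ∈ Finset.range p,
      (∏ k ∈ (Finset.range p).erase m, g k) * (2*z - c m)
        = P / z + ((z^2 - 1)/z * P) * (1 / g m) := by
    intro m hm
    rw [herase m hm]
    have hg := (hgpos m).ne'
    have hgm : g m = z^2 - c m * z + 1 := by simp only [hgdef]
    field_simp
    rw [hgm]
    ring
  have E2 : ↑p * (P / z) + ((z^2 - 1)/z * P) * T = 2*(z^p - 1)*(↑p*(z^p/z)) := by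
    rw [← hzz, ← E, Finset.sum_congr rfl step, Finset.sum_add_distrib, Finset.sum_const,
      Finset.card_range, nsmul_eq_mul, hTdef, Finset.mul_sum]
  have hT : T * ((z^2 - 1) * (z^p - 1)) = ↑p * (z^p + 1) := by
    have h := E2
    rw [hPdef] at h
    field_simp at h
    have hfac : (z^p - 1) * (T * ((z^2 - 1)*(z^p - 1)) - ↑p * (z^p + 1)) = 0 := by
      linear_combination (z^p - 1) * h
    rcases mul_eq_zero.mp hfac with h1 | h1
    · exact absurd h1 hzp
    · linarith
  have hsum : (∑ m ∈ Finset.range p,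
      1 / (Real.sin (Real.pi * m / p) ^ 2 + Real.sinh x ^ 2)) = 4*z*T := by
    rw [hTdef, Finset.mul_sum]
    refine Finset.sum_congr rfl fun m hm => ?_
    rw [hterm m, one_div_div, mul_one_div]
  -- closed forms in u
  have ep : Real.exp (↑p * x) = u ^ p := Real.exp_nat_mul x p
  have e2 : Real.exp (2 * x) = u ^ 2 := by
    rw [show (2:ℝ) * x = ((2:ℕ):ℝ) * x by norm_num, Real.exp_nat_mul]
  have e2p : Real.exp (2 * ↑p * x) = (u ^ p) ^ 2 := by
    rw [show (2:ℝ) * ↑p * x = ((2*p:ℕ):ℝ) * x by push_cast; ring, Real.exp_nat_mul, pow_mul']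
  have hs2 : Real.sinh (2 * x) = (u^4 - 1)/(2*u^2) := by
    rw [Real.sinh_eq, Real.exp_neg, e2]
    field_simp
  have hsp : Real.sinh (↑p * x) = ((u^p)^2 - 1)/(2*u^p) := by
    rw [Real.sinh_eq, Real.exp_neg, ep]
    field_simp
  have hs2p : Real.sinh (2 * ↑p * x) = ((u^p)^4 - 1)/(2*(u^p)^2) := by
    rw [Real.sinh_eq, Real.exp_neg, e2p]
    field_simp
  have hcp : Real.cosh (↑p * x) = ((u^p)^2 + 1)/(2*u^p) := by
    rw [Real.cosh_eq, Real.exp_neg, ep]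
    field_simp
  have hzpw : z ^ p = (u^p)^2 := by
    rw [hzdef, ← pow_mul, mul_comm, pow_mul]
  have hz2w : z ^ 2 = u^4 := by
    rw [hzdef, ← pow_mul]
  have h4 : u^4 - 1 ≠ 0 := sub_ne_zero.mpr (hun 4 (by omega))
  have hw2 : (u^p)^2 - 1 ≠ 0 := by
    rw [← pow_mul]
    exact sub_ne_zero.mpr (hun (p*2) (by omega))
  have hTu : T = ↑p * ((u^p)^2 + 1) / ((u^4 - 1) * ((u^p)^2 - 1)) := by
    rw [eq_div_iff (mul_ne_zero h4 hw2), ← hzpw, ← hz2w]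
    exact hT
  have hune : u ≠ 0 := hu0.ne'
  constructor
  · rw [hsum, hTu, hs2, hsp, hs2p, hzdef]
    field_simp
    ring
  · rw [hsum, hTu, hs2, hsp, hcp, hzdef]
    field_simp
    ring
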